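/- Let f(x,y) = (8/(3π)) sin(x) sin(y) sin(x+y) on the region {(x,y) : x > 0, y > 0, x + y < π}. Then the double integral of f over this region equals 1; i.e., f is a probability density. -/

import Mathlib

open Real

lemma pd_inner (x : ℝ) :
    (∫ y in (0 : ℝ)..(π - x), Real.sin x * Real.sin y * Real.sin (x + y))
      = Real.sin x * ((π - x) * Real.cos x + Real.sin x) / 2 := by
  have hderiv : ∀ y ∈ Set.uIcc (0 : ℝ) (π - x),
      HasDerivAt (fun y : ℝ => Real.sin x * (y * Real.cos x - Real.sin (x + 2*y)/2) / 2)
        (Real.sin x * Real.sin y * Real.sin (x + y)) y := by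
    intro y _
    have h1 : HasDerivAt (fun y : ℝ => y * Real.cos x) (Real.cos x) y := by
      simpa using (hasDerivAt_id y).mul_const (Real.cos x)
    have hlin : HasDerivAt (fun y : ℝ => x + 2*y) 2 y := by
      simpa using ((hasDerivAt_id y).const_mul 2).const_add x
    have h2 : HasDerivAt (fun y : ℝ => Real.sin (x + 2*y)) (Real.cos (x + 2*y) * 2) y :=
      (Real.hasDerivAt_sin (x + 2*y)).comp (h := fun y : ℝ => x + 2*y) y hlin
    have h3 := ((h1.sub (h2.div_const 2)).const_mul (Real.sin x)).div_const 2
    have key : Real.cos x - Real.cos (x + 2*y) = 2 * Real.sin (x + y) * Real.sin y := by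
      have h := Real.cos_sub_cos x (x + 2*y)
      rw [show (x + (x + 2*y))/2 = x + y by ring,
          show (x - (x + 2*y))/2 = -y by ring, Real.sin_neg] at h
      linarith
    refine h3.congr_deriv (Eq.symm ?_)
    linear_combination (-(Real.sin x) / 2) * key
  have hint : IntervalIntegrable (fun y : ℝ => Real.sin x * Real.sin y * Real.sin (x + y))
      MeasureTheory.volume 0 (π - x) := by
    apply Continuous.intervalIntegrable; continuity
  rw [intervalIntegral.integral_eq_sub_of_hasDerivAt hderiv hint]
  have hs : Real.sin (x + 2*(π - x)) = -Real.sin x := by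
    rw [show x + 2*(π - x) = 2*π - x by ring, Real.sin_sub, Real.sin_two_pi, Real.cos_two_pi]
    ring
  simp only [hs]
  simp [Real.sin_add]
  ring

theorem poisson_delaunay_pair_angle_density_integrates_to_one :
    (∫ x in (0 : ℝ)..π, ∫ y in (0 : ℝ)..(π - x),
        (8 / (3 * π)) * (Real.sin x * Real.sin y * Real.sin (x + y))) = 1 := by
  have hπ : (π : ℝ) ≠ 0 := Real.pi_ne_zero
  have step : ∀ x : ℝ,
      (∫ y in (0 : ℝ)..(π - x), (8 / (3 * π)) * (Real.sin x * Real.sin y * Real.sin (x + y)))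
        = (8 / (3 * π)) * (Real.sin x * ((π - x) * Real.cos x + Real.sin x) / 2) := by
    intro x
    rw [intervalIntegral.integral_const_mul, pd_inner]
  simp_rw [step]
  rw [intervalIntegral.integral_const_mul]
  have main : (∫ x in (0 : ℝ)..π, Real.sin x * ((π - x) * Real.cos x + Real.sin x) / 2)
      = 3 * π / 8 := by
    have hderiv : ∀ x ∈ Set.uIcc (0 : ℝ) π,
        HasDerivAt (fun x : ℝ =>
            -((π - x) * Real.cos (2*x)) / 8 - 3 * Real.sin (2*x) / 16 + x / 4)
          (Real.sin x * ((π - x) * Real.cos x + Real.sin x) / 2) x := by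
      intro x _
      have hlin : HasDerivAt (fun x : ℝ => 2*x) 2 x := by
        simpa using (hasDerivAt_id x).const_mul 2
      have hc : HasDerivAt (fun x : ℝ => Real.cos (2*x)) (-Real.sin (2*x) * 2) x :=
        (Real.hasDerivAt_cos (2*x)).comp (h := fun x : ℝ => 2*x) x hlin
      have hs : HasDerivAt (fun x : ℝ => Real.sin (2*x)) (Real.cos (2*x) * 2) x :=
        (Real.hasDerivAt_sin (2*x)).comp (h := fun x : ℝ => 2*x) x hlin
      have hpx : HasDerivAt (fun x : ℝ => π - x) (-1) x := by
        simpa using (hasDerivAt_id x).const_sub π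
      have h3 := ((((hpx.mul hc).neg.div_const 8).sub
        ((hs.const_mul 3).div_const 16)).add ((hasDerivAt_id x).div_const 4))
      refine h3.congr_deriv (Eq.symm ?_)
      have k1 : Real.sin (2*x) = 2 * Real.sin x * Real.cos x := Real.sin_two_mul x
      have k2 : Real.cos (2*x) = Real.cos x ^ 2 - Real.sin x ^ 2 := Real.cos_two_mul' x
      have kp : Real.sin x ^ 2 + Real.cos x ^ 2 = 1 := Real.sin_sq_add_cos_sq x
      linear_combination (-(π - x)/4) * k1 + (1/4) * k2 + (1/4) * kp
    have hint : IntervalIntegrable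
        (fun x : ℝ => Real.sin x * ((π - x) * Real.cos x + Real.sin x) / 2)
        MeasureTheory.volume 0 π := by
      apply Continuous.intervalIntegrable; continuity
    rw [intervalIntegral.integral_eq_sub_of_hasDerivAt hderiv hint]
    simp [Real.sin_two_pi, Real.cos_two_pi]
    ring
  rw [main]
  field_simp
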